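/- (Equicontinuity of approximately holomorphic families) Let D ⊂ ℂ be a disk and F a family of C¹ functions ψ: D̄ → ℂ with uniform bounds |ψ| ≤ M₁ and |∂ψ/∂z̄| ≤ M₂ on D̄. Then F is equicontinuous at every interior point of D. -/

import Mathlib

open Metric Complex MeasureTheory intervalIntegral Set Real

/-- The antiholomorphic derivative `∂ψ/∂z̄ = (1/2)(Dψ(1) + i·Dψ(i))`. -/
noncomputable def dbar (ψ : ℂ → ℂ) (z : ℂ) : ℂ :=
  (1 / 2) * (fderiv ℝ ψ z 1 + Complex.I * fderiv ℝ ψ z Complex.I)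

theorem dbar_alg (L : ℂ →L[ℝ] ℂ) (u : ℂ) :
    Complex.I • L u - L (u * Complex.I) =
      Complex.I * (starRingEnd ℂ u) * (L 1 + Complex.I * L Complex.I) := by
  have h1 : L u = u.re • L 1 + u.im • L Complex.I := by
    conv_lhs => rw [show u = u.re • (1:ℂ) + u.im • Complex.I by
      simp [smul_eq_mul, Complex.re_add_im]]
    rw [map_add, _root_.map_smul, _root_.map_smul]
  have h2 : L (u * Complex.I) = (-u.im) • L 1 + u.re • L Complex.I := by
    conv_lhs => rw [show u * Complex.I = (-u.im) • (1:ℂ) + u.re • Complex.I by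
      push_cast [smul_eq_mul]
      rw [show u = u.re + u.im * Complex.I by simp [Complex.re_add_im]]
      ring_nf
      simp [Complex.I_sq]
      ring]
    rw [map_add, _root_.map_smul, _root_.map_smul]
  rw [h1, h2, show (starRingEnd ℂ) u = (u.re:ℂ) - u.im * Complex.I by
    simp [Complex.ext_iff]]
  simp only [smul_eq_mul, real_smul]
  push_cast
  ring_nf
  rw [show (Complex.I:ℂ)^3 = -Complex.I by simp [pow_succ, Complex.I_mul_I]]
  ring_nf
  simp only [Complex.I_sq]
  ring

/-- Lemma A: the circle average of `ψ` around `ζ` at radius `r` is within `4πM₂r`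
of `2π ψ(ζ)`. -/
theorem circle_avg_close {R M₂ : ℝ} {c₀ : ℂ} {ψ : ℂ → ℂ}
    (hC1 : ContDiffOn ℝ 1 ψ (closedBall c₀ R))
    (hM₂ : ∀ z ∈ ball c₀ R, ‖dbar ψ z‖ ≤ M₂)
    (hM₂0 : 0 ≤ M₂)
    {ζ : ℂ} {r : ℝ} (hr : 0 < r) (hsub : closedBall ζ r ⊆ ball c₀ R) :
    ‖(∫ θ in (0:ℝ)..(2*π), ψ (circleMap ζ r θ)) - (2*π : ℝ) • ψ ζ‖
      ≤ 4 * π * M₂ * r := by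
  have hψc : ContinuousOn ψ (ball c₀ R) := hC1.continuousOn.mono ball_subset_closedBall
  have hψd : ∀ z ∈ ball c₀ R, HasFDerivAt ψ (fderiv ℝ ψ z) z := fun z hz =>
    (((hC1.mono ball_subset_closedBall).differentiableOn one_ne_zero).differentiableAt
      (isOpen_ball.mem_nhds hz)).hasFDerivAt
  have hfc : ContinuousOn (fderiv ℝ ψ) (ball c₀ R) :=
    (hC1.mono ball_subset_closedBall).continuousOn_fderiv_of_isOpen isOpen_ball le_rfl
  -- the circle average at radius exp t
  set G : ℝ → ℂ := fun t => ∫ θ in (0:ℝ)..(2*π), ψ (circleMap ζ (Real.exp t) θ) with hG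
  -- Step 1: key estimate between two radii
  have key : ∀ a b : ℝ, a ≤ b → Real.exp b ≤ r →
      ‖G b - G a‖ ≤ 4 * π * M₂ * (Real.exp b - Real.exp a) := by
    intro a b hab hbr
    -- setup
    set F : ℂ → ℂ := fun w => ψ (ζ + Complex.exp w) with hF
    set F' : ℂ → ℂ →L[ℝ] ℂ := fun w => (fderiv ℝ ψ (ζ + Complex.exp w)).comp
      (((1 : ℂ →L[ℂ] ℂ).smulRight (Complex.exp w)).restrictScalars ℝ) with hF'
    have hmem : ∀ w : ℂ, w.re ≤ b → ζ + Complex.exp w ∈ ball c₀ R := by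
      intro w hw
      apply hsub
      simp only [mem_closedBall, Complex.dist_eq, add_sub_cancel_left, Complex.norm_exp]
      exact le_trans (Real.exp_le_exp.2 hw) hbr
    have hFd : ∀ w : ℂ, w.re ≤ b → HasFDerivAt F (F' w) w := by
      intro w hw
      have h1 : HasFDerivAt (fun w => ζ + Complex.exp w)
          (((1 : ℂ →L[ℂ] ℂ).smulRight (Complex.exp w)).restrictScalars ℝ) w :=
        (((Complex.hasDerivAt_exp w).hasFDerivAt).restrictScalars ℝ).const_add ζ
      exact (hψd _ (hmem w hw)).comp w h1
    have hFkey : ∀ w : ℂ, Complex.I • F' w 1 - F' w Complex.I =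
        2 * Complex.I * (starRingEnd ℂ (Complex.exp w)) * dbar ψ (ζ + Complex.exp w) := by
      intro w
      have := dbar_alg (fderiv ℝ ψ (ζ + Complex.exp w)) (Complex.exp w)
      simp only [hF', ContinuousLinearMap.comp_apply,
        ContinuousLinearMap.coe_restrictScalars', ContinuousLinearMap.smulRight_apply,
        ContinuousLinearMap.one_apply, smul_eq_mul, one_mul] at this ⊢
      rw [show Complex.I * Complex.exp w = Complex.exp w * Complex.I from mul_comm _ _,
        this, dbar]
      ring
    -- continuity of dbar composed with the exponential
    have hdbarc : ContinuousOn (dbar ψ) (ball c₀ R) := by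
      unfold dbar
      exact continuousOn_const.mul ((hfc.clm_apply continuousOn_const).add
        (continuousOn_const.mul (hfc.clm_apply continuousOn_const)))
    have hgc : Continuous fun w : ℂ => ζ + Complex.exp w := by continuity
    set S : Set ℂ := {w : ℂ | w.re ≤ b} with hS
    have hScont : ContinuousOn (fun w => Complex.I • F' w 1 - F' w Complex.I) S := by
      have : ContinuousOn (fun w => 2 * Complex.I * (starRingEnd ℂ (Complex.exp w)) *
          dbar ψ (ζ + Complex.exp w)) S := by
        apply ContinuousOn.mul
        · exact (continuous_const.mul
            (Complex.continuous_conj.comp Complex.continuous_exp)).continuousOn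
        · exact hdbarc.comp hgc.continuousOn (fun w hw => hmem w hw)
      exact this.congr (fun w _ => hFkey w)
    have hFcont : ContinuousOn F S :=
      hψc.comp hgc.continuousOn (fun w hw => hmem w hw)
    have hrect_sub : uIcc a b ×ℂ uIcc (0:ℝ) (2*π) ⊆ S := by
      intro w hw
      rw [Complex.mem_reProdIm] at hw
      have := hw.1
      rw [uIcc_of_le hab] at this
      exact this.2
    have hrect_cpt : IsCompact (uIcc a b ×ℂ uIcc (0:ℝ) (2*π)) := by
      apply Metric.isCompact_of_isClosed_isBounded
      · exact isClosed_Icc.reProdIm isClosed_Icc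
      · exact (Metric.isBounded_Icc _ _).reProdIm (Metric.isBounded_Icc _ _)
    have Hi : IntegrableOn (fun w => Complex.I • F' w 1 - F' w Complex.I)
        (uIcc a b ×ℂ uIcc (0:ℝ) (2*π)) volume :=
      (hScont.mono hrect_sub).integrableOn_compact hrect_cpt
    have heq := Complex.integral_boundary_rect_of_continuousOn_of_hasFDerivAt_real F F'
      (⟨a, 0⟩ : ℂ) (⟨b, 2*π⟩ : ℂ) (hFcont.mono hrect_sub)
      (fun w hw => hFd w (le_of_lt (lt_of_lt_of_le hw.1.2 (le_of_eq (sup_eq_right.2 hab)))))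
      Hi
    dsimp only at heq
    have hper : ∀ x : ℝ, F (↑x + ↑(0:ℝ) * Complex.I) = F (↑x + ↑(2*π:ℝ) * Complex.I) := by
      intro x
      have h1 : ((↑(2*π:ℝ) : ℂ)) * Complex.I = 2*(π:ℂ)*Complex.I := by push_cast; ring
      simp only [hF, Complex.ofReal_zero, zero_mul, add_zero, h1, Complex.exp_add,
        Complex.exp_two_pi_mul_I, mul_one]
    have hside : ∀ t y : ℝ, F (↑t + ↑y * Complex.I) = ψ (circleMap ζ (Real.exp t) y) := by
      intro t y
      simp only [hF, circleMap]
      congr 2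
      rw [Complex.exp_add, ← Complex.ofReal_exp]
    have heq2 : Complex.I • (G b - G a) =
        ∫ x in a..b, ∫ y in (0:ℝ)..(2*π),
          (Complex.I • F' (↑x + ↑y * Complex.I) 1 - F' (↑x + ↑y * Complex.I) Complex.I) := by
      rw [smul_sub, ← heq]
      have e1 : G b = ∫ y in (0:ℝ)..(2*π), F (↑b + ↑y * Complex.I) :=
        intervalIntegral.integral_congr (fun y _ => (hside b y).symm)
      have e2 : G a = ∫ y in (0:ℝ)..(2*π), F (↑a + ↑y * Complex.I) :=
        intervalIntegral.integral_congr (fun y _ => (hside a y).symm)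
      rw [e1, e2, intervalIntegral.integral_congr (fun x _ => hper x)]
      abel
    have hbound : ‖Complex.I • (G b - G a)‖ ≤ 4*π*M₂*(Real.exp b - Real.exp a) := by
      rw [heq2]
      have houter : ∀ x ∈ Set.uIoc a b,
          ‖∫ y in (0:ℝ)..(2*π), (Complex.I • F' (↑x + ↑y * Complex.I) 1
            - F' (↑x + ↑y * Complex.I) Complex.I)‖ ≤ 4*π*M₂*Real.exp x := by
        intro x hx
        have hxb : x ≤ b := by
          rw [Set.uIoc_of_le hab] at hx; exact hx.2
        have hin : ∀ y ∈ Set.uIoc (0:ℝ) (2*π),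
            ‖Complex.I • F' (↑x + ↑y * Complex.I) 1
              - F' (↑x + ↑y * Complex.I) Complex.I‖ ≤ 2*M₂*Real.exp x := by
          intro y _
          rw [hFkey]
          have hre : ((↑x + ↑y * Complex.I : ℂ)).re = x := by simp
          have habs : ‖Complex.exp (↑x + ↑y * Complex.I)‖ = Real.exp x := by
            rw [Complex.norm_exp, hre]
          have hdb : ‖dbar ψ (ζ + Complex.exp (↑x + ↑y * Complex.I))‖ ≤ M₂ :=
            hM₂ _ (hmem _ (le_of_eq hre |>.trans hxb))
          calc ‖2 * Complex.I * (starRingEnd ℂ) (Complex.exp (↑x + ↑y * Complex.I)) *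
                dbar ψ (ζ + Complex.exp (↑x + ↑y * Complex.I))‖
              = 2 * ‖Complex.exp (↑x + ↑y * Complex.I)‖ *
                ‖dbar ψ (ζ + Complex.exp (↑x + ↑y * Complex.I))‖ := by
                simp [map_mul]
            _ ≤ 2 * Real.exp x * M₂ := by
                rw [habs]
                exact mul_le_mul_of_nonneg_left hdb (by positivity)
            _ = 2*M₂*Real.exp x := by ring
        have := intervalIntegral.norm_integral_le_of_norm_le_const hin
        calc ‖∫ y in (0:ℝ)..(2*π), (Complex.I • F' (↑x + ↑y * Complex.I) 1
              - F' (↑x + ↑y * Complex.I) Complex.I)‖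
            ≤ 2*M₂*Real.exp x * |2*π - 0| := this
          _ = 4*π*M₂*Real.exp x := by
              rw [sub_zero, _root_.abs_of_nonneg (by positivity)]
              ring
      have hgint : IntervalIntegrable (fun x => 4*π*M₂*Real.exp x) volume a b :=
        (continuous_const.mul Real.continuous_exp).intervalIntegrable a b
      calc ‖∫ x in a..b, ∫ y in (0:ℝ)..(2*π), (Complex.I • F' (↑x + ↑y * Complex.I) 1
            - F' (↑x + ↑y * Complex.I) Complex.I)‖
          ≤ |∫ x in a..b, 4*π*M₂*Real.exp x| := by
            apply intervalIntegral.norm_integral_le_abs_of_norm_le _ hgint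
            exact ((ae_restrict_mem measurableSet_uIoc).mono houter)
        _ = 4*π*M₂*(Real.exp b - Real.exp a) := by
            rw [intervalIntegral.integral_const_mul, integral_exp,
              _root_.abs_of_nonneg (by
                apply mul_nonneg (by positivity)
                exact sub_nonneg.2 (Real.exp_le_exp.2 hab))]
    calc ‖G b - G a‖ = ‖Complex.I • (G b - G a)‖ := by
          rw [norm_smul, Complex.norm_I, one_mul]
      _ ≤ 4*π*M₂*(Real.exp b - Real.exp a) := hbound
  -- Step 2: let the inner radius tend to 0
  have hζ : ζ ∈ ball c₀ R := hsub (mem_closedBall_self hr.le)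
  have hGb : G (Real.log r) = ∫ θ in (0:ℝ)..(2*π), ψ (circleMap ζ r θ) := by
    simp only [hG]
    rw [Real.exp_log hr]
  rw [← hGb]
  apply le_of_forall_pos_le_add
  intro ε hε
  have hψζ : ContinuousAt ψ ζ := hC1.continuousOn.continuousAt
    (Filter.mem_of_superset (isOpen_ball.mem_nhds hζ) ball_subset_closedBall)
  obtain ⟨δ', hδ'pos, hδ'⟩ := Metric.continuousAt_iff.1 hψζ (ε/(4*π)) (by positivity)
  set a := Real.log (min r (δ'/2)) with ha
  have hmin_pos : 0 < min r (δ'/2) := lt_min hr (half_pos hδ'pos)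
  have hexpa : Real.exp a = min r (δ'/2) := Real.exp_log hmin_pos
  have hab : a ≤ Real.log r := by
    rw [← Real.exp_le_exp, hexpa, Real.exp_log hr]; exact min_le_left _ _
  have h1 := key a (Real.log r) hab (le_of_eq (Real.exp_log hr))
  have hmemc : ∀ θ : ℝ, circleMap ζ (Real.exp a) θ ∈ ball c₀ R := by
    intro θ
    apply hsub
    simp only [mem_closedBall, Complex.dist_eq]
    rw [circleMap_sub_center]
    calc ‖circleMap 0 (Real.exp a) θ‖ = |Real.exp a| := norm_circleMap_zero _ _
      _ = Real.exp a := _root_.abs_of_nonneg (Real.exp_pos a).le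
      _ ≤ r := by rw [hexpa]; exact min_le_left _ _
  have hint : IntervalIntegrable (fun θ => ψ (circleMap ζ (Real.exp a) θ))
      volume 0 (2*π) :=
    (hψc.comp_continuous (continuous_circleMap _ _) hmemc).intervalIntegrable 0 (2*π)
  have h2 : ‖G a - (2*π:ℝ) • ψ ζ‖ ≤ ε/2 := by
    have hGa0 : G a = ∫ θ in (0:ℝ)..(2*π), ψ (circleMap ζ (Real.exp a) θ) := by
      simp only [hG]
    have hGa : G a - (2*π:ℝ) • ψ ζ
        = ∫ θ in (0:ℝ)..(2*π), (ψ (circleMap ζ (Real.exp a) θ) - ψ ζ) := by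
      rw [intervalIntegral.integral_sub hint (intervalIntegrable_const),
        intervalIntegral.integral_const, sub_zero, hGa0]
    rw [hGa]
    have hb : ∀ θ ∈ Set.uIoc (0:ℝ) (2*π),
        ‖ψ (circleMap ζ (Real.exp a) θ) - ψ ζ‖ ≤ ε/(4*π) := by
      intro θ _
      have hd : dist (circleMap ζ (Real.exp a) θ) ζ < δ' := by
        rw [Complex.dist_eq, circleMap_sub_center]
        calc ‖circleMap 0 (Real.exp a) θ‖ = |Real.exp a| := norm_circleMap_zero _ _
          _ = Real.exp a := _root_.abs_of_nonneg (Real.exp_pos a).le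
          _ ≤ δ'/2 := by rw [hexpa]; exact min_le_right _ _
          _ < δ' := half_lt_self hδ'pos
      exact le_of_lt (by simpa [dist_eq_norm] using hδ' hd)
    calc ‖∫ θ in (0:ℝ)..(2*π), (ψ (circleMap ζ (Real.exp a) θ) - ψ ζ)‖
        ≤ ε/(4*π) * |2*π - 0| := intervalIntegral.norm_integral_le_of_norm_le_const hb
      _ = ε/2 := by
          rw [sub_zero, _root_.abs_of_nonneg (by positivity)]
          field_simp
          ring
  calc ‖G (Real.log r) - (2*π:ℝ) • ψ ζ‖
      ≤ ‖G (Real.log r) - G a‖ + ‖G a - (2*π:ℝ) • ψ ζ‖ := norm_sub_le_norm_sub_add_norm_sub _ _ _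
    _ ≤ 4*π*M₂*(Real.exp (Real.log r) - Real.exp a) + ε/2 := add_le_add h1 h2
    _ ≤ 4*π*M₂*r + ε := by
        rw [Real.exp_log hr]
        have h4 : 4*π*M₂*(r - Real.exp a) ≤ 4*π*M₂*r := by
          apply mul_le_mul_of_nonneg_left _ (by positivity)
          linarith [(Real.exp_pos a).le]
        linarith

/-- Lemma B: the integral of `ψ` over the disk `B(ζ,ρ)` is within `(4/3)πM₂ρ³`
of `πρ² ψ(ζ)`. -/
theorem solid_avg_close {R M₂ : ℝ} {c₀ : ℂ} {ψ : ℂ → ℂ}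
    (hC1 : ContDiffOn ℝ 1 ψ (closedBall c₀ R))
    (hM₂ : ∀ z ∈ ball c₀ R, ‖dbar ψ z‖ ≤ M₂) (hM₂0 : 0 ≤ M₂)
    {ζ : ℂ} {ρ : ℝ} (hρ : 0 < ρ) (hsub : closedBall ζ ρ ⊆ ball c₀ R) :
    ‖(∫ z in ball ζ ρ, ψ z) - (π * ρ^2) • ψ ζ‖ ≤ 4/3*π*M₂*ρ^3 := by
  have hψc : ContinuousOn ψ (ball c₀ R) := hC1.continuousOn.mono ball_subset_closedBall
  have hψcb : ContinuousOn ψ (closedBall ζ ρ) := hψc.mono hsub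
  have hpc : ∀ p : ℝ × ℝ, ζ + Complex.polarCoord.symm p = circleMap ζ p.1 p.2 := by
    intro p
    rw [Complex.polarCoord_symm_apply, circleMap, Complex.exp_mul_I]
    push_cast
    ring
  have hcm : Continuous fun p : ℝ × ℝ => circleMap ζ p.1 p.2 := by
    unfold circleMap
    fun_prop
  -- the volume of the ball
  have hvol : (volume (ball ζ ρ)).toReal = π * ρ^2 := by
    rw [Complex.volume_ball]
    rw [ENNReal.toReal_mul, ENNReal.toReal_pow, ENNReal.toReal_ofReal hρ.le]
    simp [NNReal.coe_real_pi]
    ring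
  -- integrability of ψ on the ball
  have hψint : IntegrableOn ψ (ball ζ ρ) volume :=
    (hψcb.integrableOn_compact (isCompact_closedBall _ _)).mono_set ball_subset_closedBall
  have hsplit : (∫ z in ball ζ ρ, ψ z) - (π * ρ^2) • ψ ζ
      = ∫ z in ball ζ ρ, (ψ z - ψ ζ) := by
    rw [MeasureTheory.integral_sub hψint (integrableOn_const measure_ball_lt_top.ne),
      setIntegral_const, measureReal_def, hvol]
  rw [hsplit]
  -- pass to an integral over the whole plane and then polar coordinates
  set f : ℂ → ℂ := (ball ζ ρ).indicator (fun z => ψ z - ψ ζ) with hf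
  have h1 : (∫ z in ball ζ ρ, (ψ z - ψ ζ)) = ∫ z, f z := by
    rw [hf, MeasureTheory.integral_indicator measurableSet_ball]
  have h2 : (∫ z, f z) = ∫ u, f (ζ + u) := (integral_add_left_eq_self f ζ).symm
  have h3 : (∫ u, f (ζ + u)) = ∫ p in polarCoord.target,
      p.1 • f (ζ + Complex.polarCoord.symm p) :=
    (Complex.integral_comp_polarCoord_symm (fun u => f (ζ + u))).symm
  -- restrict to r < ρ
  have h4 : (∫ p in polarCoord.target, p.1 • f (ζ + Complex.polarCoord.symm p))
      = ∫ p in Ioo (0:ℝ) ρ ×ˢ Ioo (-π) π, p.1 • (ψ (circleMap ζ p.1 p.2) - ψ ζ) := by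
    rw [show polarCoord.target = Ioi (0:ℝ) ×ˢ Ioo (-π) π from rfl]
    have : ∀ p ∈ Ioi (0:ℝ) ×ˢ Ioo (-π) π,
        p.1 • f (ζ + Complex.polarCoord.symm p)
          = ({p : ℝ × ℝ | p.1 < ρ}).indicator
              (fun p => p.1 • (ψ (circleMap ζ p.1 p.2) - ψ ζ)) p := by
      intro p hp
      have habs : ‖Complex.polarCoord.symm p‖ = p.1 := by
        rw [Complex.norm_polarCoord_symm, _root_.abs_of_nonneg (le_of_lt hp.1)]
      by_cases hlt : p.1 < ρ
      · rw [Set.indicator_of_mem (show p ∈ {q : ℝ × ℝ | q.1 < ρ} from hlt), hf,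
          Set.indicator_of_mem, hpc]
        rw [mem_ball, Complex.dist_eq, add_sub_cancel_left, habs]
        exact hlt
      · rw [Set.indicator_of_notMem (show p ∉ {q : ℝ × ℝ | q.1 < ρ} from hlt), hf,
          Set.indicator_of_notMem, smul_zero]
        rw [mem_ball, Complex.dist_eq, add_sub_cancel_left, habs]
        exact hlt
    rw [setIntegral_congr_fun (measurableSet_Ioi.prod measurableSet_Ioo) this,
      setIntegral_indicator (measurableSet_lt measurable_fst measurable_const)]
    have hset : (Ioi (0:ℝ) ×ˢ Ioo (-π) π) ∩ {q : ℝ × ℝ | q.1 < ρ}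
        = Ioo (0:ℝ) ρ ×ˢ Ioo (-π) π := by
      ext ⟨p1, p2⟩
      simp only [mem_inter_iff, mem_prod, mem_Ioi, mem_Ioo, mem_setOf_eq]
      tauto
    rw [hset]
  -- Fubini
  have hcball : ∀ p : ℝ × ℝ, p.1 ∈ Icc 0 ρ → circleMap ζ p.1 p.2 ∈ ball c₀ R := by
    intro p hp
    apply hsub
    simp only [mem_closedBall, Complex.dist_eq, circleMap_sub_center]
    calc ‖circleMap 0 p.1 p.2‖ = |p.1| := norm_circleMap_zero _ _
      _ ≤ ρ := abs_le.2 ⟨by linarith [hp.1], hp.2⟩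
  have hcontp : ContinuousOn (fun p : ℝ × ℝ => p.1 • (ψ (circleMap ζ p.1 p.2) - ψ ζ))
      (Icc (0:ℝ) ρ ×ˢ Icc (-π) π) := by
    apply ContinuousOn.smul continuous_fst.continuousOn
    apply ContinuousOn.sub _ continuousOn_const
    exact hψc.comp hcm.continuousOn (fun p hp => hcball p hp.1)
  have hintg : IntegrableOn (fun p : ℝ × ℝ => p.1 • (ψ (circleMap ζ p.1 p.2) - ψ ζ))
      (Ioo (0:ℝ) ρ ×ˢ Ioo (-π) π) volume :=
    (hcontp.integrableOn_compact (isCompact_Icc.prod isCompact_Icc)).mono_set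
      (prod_mono Ioo_subset_Icc_self Ioo_subset_Icc_self)
  have hFub : (∫ p in Ioo (0:ℝ) ρ ×ˢ Ioo (-π) π, p.1 • (ψ (circleMap ζ p.1 p.2) - ψ ζ))
      = ∫ r in Ioo (0:ℝ) ρ, ∫ θ in Ioo (-π) π, (r • (ψ (circleMap ζ r θ) - ψ ζ)) := by
    rw [MeasureTheory.Measure.volume_eq_prod] at hintg ⊢
    exact setIntegral_prod _ hintg
  -- the inner integral
  have hinner : ∀ r, r ∈ Ioo (0:ℝ) ρ →
      (∫ θ in Ioo (-π) π, (r • (ψ (circleMap ζ r θ) - ψ ζ)))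
        = r • ((∫ θ in (0:ℝ)..(2*π), ψ (circleMap ζ r θ)) - (2*π:ℝ) • ψ ζ) := by
    intro r hr'
    have hcont : Continuous fun θ => ψ (circleMap ζ r θ) :=
      hψc.comp_continuous (continuous_circleMap _ _)
        (fun θ => hcball (r, θ) ⟨hr'.1.le, hr'.2.le⟩)
    have hper : Function.Periodic (fun θ => ψ (circleMap ζ r θ) - ψ ζ) (2*π) := by
      intro θ
      simp only [periodic_circleMap ζ r θ]
    calc (∫ θ in Ioo (-π) π, (r • (ψ (circleMap ζ r θ) - ψ ζ)))
        = r • ∫ θ in Ioo (-π) π, (ψ (circleMap ζ r θ) - ψ ζ) := by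
          rw [MeasureTheory.integral_smul]
      _ = r • ∫ θ in (-π)..π, (ψ (circleMap ζ r θ) - ψ ζ) := by
          rw [intervalIntegral.integral_of_le (by linarith [Real.pi_pos]),
            integral_Ioc_eq_integral_Ioo]
      _ = r • ∫ θ in (0:ℝ)..(2*π), (ψ (circleMap ζ r θ) - ψ ζ) := by
          congr 1
          have h6 := hper.intervalIntegral_add_eq (-π) 0
          rw [show -π + 2*π = π by ring, zero_add] at h6
          exact h6
      _ = r • ((∫ θ in (0:ℝ)..(2*π), ψ (circleMap ζ r θ)) - (2*π:ℝ) • ψ ζ) := by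
          congr 1
          rw [intervalIntegral.integral_sub (hcont.intervalIntegrable _ _)
            intervalIntegrable_const, intervalIntegral.integral_const, sub_zero]
  rw [h1, h2, h3, h4, hFub]
  have hbd : ∀ r ∈ Ioo (0:ℝ) ρ,
      ‖∫ θ in Ioo (-π) π, (r • (ψ (circleMap ζ r θ) - ψ ζ))‖ ≤ 4*π*M₂*r^2 := by
    intro r hr'
    rw [hinner r hr', norm_smul, Real.norm_eq_abs, _root_.abs_of_nonneg hr'.1.le]
    have hca := circle_avg_close hC1 hM₂ hM₂0 hr'.1
      (subset_trans (closedBall_subset_closedBall hr'.2.le) hsub)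
    calc r * ‖(∫ θ in (0:ℝ)..(2*π), ψ (circleMap ζ r θ)) - (2*π:ℝ) • ψ ζ‖
        ≤ r * (4*π*M₂*r) := mul_le_mul_of_nonneg_left hca hr'.1.le
      _ = 4*π*M₂*r^2 := by ring
  have hgint2 : IntegrableOn (fun r : ℝ => 4*π*M₂*r^2) (Ioo (0:ℝ) ρ) volume :=
    (((continuous_const.mul (continuous_pow 2)).continuousOn).integrableOn_compact
      isCompact_Icc).mono_set Ioo_subset_Icc_self
  calc ‖∫ r in Ioo (0:ℝ) ρ, ∫ θ in Ioo (-π) π, (r • (ψ (circleMap ζ r θ) - ψ ζ))‖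
      ≤ ∫ r in Ioo (0:ℝ) ρ, 4*π*M₂*r^2 := by
        apply MeasureTheory.norm_integral_le_of_norm_le hgint2
        exact (ae_restrict_mem measurableSet_Ioo).mono hbd
    _ = 4/3*π*M₂*ρ^3 := by
        rw [← integral_Ioc_eq_integral_Ioo, ← intervalIntegral.integral_of_le hρ.le,
          intervalIntegral.integral_const_mul, integral_pow]
        norm_num
        ring

/-- volume of a complex ball, real version -/
theorem cvol (c : ℂ) (t : ℝ) (ht : 0 ≤ t) : (volume (ball c t)).toReal = π * t^2 := by
  rw [Complex.volume_ball, ENNReal.toReal_mul, ENNReal.toReal_pow, ENNReal.toReal_ofReal ht]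
  simp [NNReal.coe_real_pi]
  ring

set_option maxHeartbeats 2000000 in
/-- **Equicontinuity of approximately holomorphic families.** Let `F` be a
family of `C¹` functions on the closed disk `D̄` of radius `R` about `c₀`, with
uniform bounds `|ψ| ≤ M₁` and `|∂ψ/∂z̄| ≤ M₂`. Then `F` is equicontinuous at
every interior point of `D`. -/
theorem approx_holomorphic_family_equicontinuous
    (R M₁ M₂ : ℝ) (hR : 0 < R) (c₀ : ℂ) (F : Set (ℂ → ℂ))
    (hC1 : ∀ ψ ∈ F, ContDiffOn ℝ 1 ψ (closedBall c₀ R))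
    (hM₁ : ∀ ψ ∈ F, ∀ z ∈ closedBall c₀ R, ‖ψ z‖ ≤ M₁)
    (hM₂ : ∀ ψ ∈ F, ∀ z ∈ ball c₀ R, ‖dbar ψ z‖ ≤ M₂) :
    ∀ ζ₀ ∈ ball c₀ R, ∀ ε : ℝ, 0 < ε → ∃ δ : ℝ, 0 < δ ∧ ball ζ₀ δ ⊆ ball c₀ R ∧
      ∀ ψ ∈ F, ∀ ζ₁ ∈ ball ζ₀ δ, ∀ ζ₂ ∈ ball ζ₀ δ,
        ‖ψ ζ₁ - ψ ζ₂‖ < ε := by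
  intro ζ₀ hζ₀ ε hε
  set s := R - dist ζ₀ c₀ with hs
  have hspos : 0 < s := by
    rw [hs]
    rw [mem_ball] at hζ₀
    linarith
  rcases F.eq_empty_or_nonempty with hFe | ⟨ψ₀, hψ₀⟩
  · refine ⟨s, hspos, ?_, ?_⟩
    · intro z hz
      rw [mem_ball] at hz ⊢
      have := dist_triangle z ζ₀ c₀
      rw [hs] at hz
      linarith
    · intro ψ hψ
      rw [hFe] at hψ
      exact absurd hψ (Set.notMem_empty ψ)
  have hM₁0 : 0 ≤ M₁ :=
    le_trans (norm_nonneg _) (hM₁ ψ₀ hψ₀ c₀ (mem_closedBall_self hR.le))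
  have hM₂0 : 0 ≤ M₂ :=
    le_trans (norm_nonneg _) (hM₂ ψ₀ hψ₀ ζ₀ hζ₀)
  set ρ := min (s/2) (ε/(8*(M₂+1))) with hρdef
  have hρpos : 0 < ρ := lt_min (by linarith) (by positivity)
  set δ := min (ρ/2) (ε*ρ/(48*(M₁+1))) with hδdef
  have hδpos : 0 < δ := lt_min (by linarith) (by positivity)
  have hδρ : δ ≤ ρ/2 := min_le_left _ _
  have hρs : ρ ≤ s/2 := min_le_left _ _
  have hδsub : ball ζ₀ δ ⊆ ball c₀ R := by
    intro z hz
    rw [mem_ball] at hz ⊢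
    have := dist_triangle z ζ₀ c₀
    have : δ < s := by linarith
    linarith [dist_triangle z ζ₀ c₀]
  refine ⟨δ, hδpos, hδsub, ?_⟩
  intro ψ hψ ζ₁ hζ₁ ζ₂ hζ₂
  have hψC1 := hC1 ψ hψ
  have hψM₂ := hM₂ ψ hψ
  have hψc : ContinuousOn ψ (ball c₀ R) :=
    (hψC1.continuousOn).mono ball_subset_closedBall
  -- closed balls of radius ρ around ζ₁, ζ₂ are inside the big ball
  have hsub : ∀ ζ ∈ ball ζ₀ δ, closedBall ζ ρ ⊆ ball c₀ R := by
    intro ζ hζ z hz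
    rw [mem_closedBall] at hz
    rw [mem_ball] at hζ ⊢
    calc dist z c₀ ≤ dist z ζ + dist ζ ζ₀ + dist ζ₀ c₀ := dist_triangle4 z ζ ζ₀ c₀
      _ < ρ + δ + (R - s) := by
          have : dist ζ₀ c₀ = R - s := by rw [hs]; ring
          rw [this]
          have := hz
          linarith
      _ ≤ R := by linarith
  have hsub₁ := hsub ζ₁ hζ₁
  have hsub₂ := hsub ζ₂ hζ₂
  have hd : dist ζ₁ ζ₂ < 2*δ := by
    calc dist ζ₁ ζ₂ ≤ dist ζ₁ ζ₀ + dist ζ₀ ζ₂ := dist_triangle _ _ _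
      _ < δ + δ := by
          rw [mem_ball] at hζ₁ hζ₂
          rw [dist_comm ζ₀ ζ₂]
          linarith
      _ = 2*δ := by ring
  -- Lemma B at both centers
  have hB₁ := solid_avg_close hψC1 hψM₂ hM₂0 hρpos hsub₁
  have hB₂ := solid_avg_close hψC1 hψM₂ hM₂0 hρpos hsub₂
  -- difference of the two disk integrals
  set A₁ := ball ζ₁ ρ with hA₁
  set A₂ := ball ζ₂ ρ with hA₂
  have hint₁ : IntegrableOn ψ A₁ volume :=
    (((hψc.mono hsub₁).integrableOn_compact (isCompact_closedBall _ _)).mono_set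
      ball_subset_closedBall)
  have hint₂ : IntegrableOn ψ A₂ volume :=
    (((hψc.mono hsub₂).integrableOn_compact (isCompact_closedBall _ _)).mono_set
      ball_subset_closedBall)
  have hd₁ : (∫ z in A₁ \ A₂, ψ z) = (∫ z in A₁, ψ z) - ∫ z in A₁ ∩ A₂, ψ z := by
    rw [← Set.diff_self_inter]
    exact MeasureTheory.integral_diff (measurableSet_ball.inter measurableSet_ball) hint₁
      inter_subset_left
  have hd₂ : (∫ z in A₂ \ A₁, ψ z) = (∫ z in A₂, ψ z) - ∫ z in A₁ ∩ A₂, ψ z := by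
    rw [Set.inter_comm A₁ A₂, ← Set.diff_self_inter]
    exact MeasureTheory.integral_diff (measurableSet_ball.inter measurableSet_ball) hint₂
      inter_subset_left
  -- volume bounds on the difference sets
  have hvd : ∀ ζ ζ' : ℂ, ζ ∈ ball ζ₀ δ → ζ' ∈ ball ζ₀ δ →
      (volume (ball ζ ρ \ ball ζ' ρ)).toReal ≤ 6*π*δ*ρ := by
    intro ζ ζ' hζ hζ'
    have hdd : dist ζ ζ' < 2*δ := by
      calc dist ζ ζ' ≤ dist ζ ζ₀ + dist ζ₀ ζ' := dist_triangle _ _ _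
        _ < δ + δ := by
            rw [mem_ball] at hζ hζ'
            rw [dist_comm ζ₀ ζ']
            linarith
        _ = 2*δ := by ring
    have hss : ball ζ ρ \ ball ζ' ρ ⊆ ball ζ' (ρ+2*δ) \ ball ζ' ρ := by
      rintro z ⟨hz1, hz2⟩
      refine ⟨?_, hz2⟩
      rw [mem_ball] at hz1 ⊢
      calc dist z ζ' ≤ dist z ζ + dist ζ ζ' := dist_triangle _ _ _
        _ < ρ + 2*δ := by linarith
    have hfin : volume (ball ζ' (ρ+2*δ)) ≠ ⊤ := (measure_ball_lt_top (x := ζ') (r := ρ+2*δ)).ne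
    have hmono : volume (ball ζ ρ \ ball ζ' ρ) ≤ volume (ball ζ' (ρ+2*δ) \ ball ζ' ρ) := measure_mono hss
    have hdiffm : volume (ball ζ' (ρ+2*δ) \ ball ζ' ρ)
        = volume (ball ζ' (ρ+2*δ)) - volume (ball ζ' ρ) :=
      measure_diff (ball_subset_ball (by linarith)) measurableSet_ball.nullMeasurableSet
        measure_ball_lt_top.ne
    have h8 : (volume (ball ζ ρ \ ball ζ' ρ)).toReal
        ≤ (volume (ball ζ' (ρ+2*δ) \ ball ζ' ρ)).toReal := by
      apply ENNReal.toReal_mono _ hmono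
      rw [hdiffm]
      exact (tsub_le_self.trans_lt measure_ball_lt_top).ne
    have h9 : (volume (ball ζ' (ρ+2*δ) \ ball ζ' ρ)).toReal
        = π*(ρ+2*δ)^2 - π*ρ^2 := by
      rw [hdiffm, ENNReal.toReal_sub_of_le (measure_mono (ball_subset_ball (by linarith))) hfin,
        cvol _ _ (by linarith), cvol _ _ hρpos.le]
    rw [h9] at h8
    calc (volume (ball ζ ρ \ ball ζ' ρ)).toReal ≤ π*(ρ+2*δ)^2 - π*ρ^2 := h8
      _ = π*(4*δ*ρ + 4*δ^2) := by ring
      _ ≤ π*(4*δ*ρ + 2*δ*ρ) := by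
          have : 4*δ^2 ≤ 2*δ*ρ := by nlinarith
          have hπ := Real.pi_pos
          nlinarith
      _ = 6*π*δ*ρ := by ring
  -- bound the integrals over difference sets
  have hIbd : ∀ ζ ζ' : ℂ, ζ ∈ ball ζ₀ δ → ζ' ∈ ball ζ₀ δ →
      ‖∫ z in ball ζ ρ \ ball ζ' ρ, ψ z‖ ≤ M₁ * (6*π*δ*ρ) := by
    intro ζ ζ' hζ hζ'
    have hss : ball ζ ρ \ ball ζ' ρ ⊆ ball c₀ R := fun z hz =>
      (hsub ζ hζ) (ball_subset_closedBall hz.1)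
    calc ‖∫ z in ball ζ ρ \ ball ζ' ρ, ψ z‖
        ≤ M₁ * (volume (ball ζ ρ \ ball ζ' ρ)).toReal := by
          apply MeasureTheory.norm_setIntegral_le_of_norm_le_const
          · exact lt_of_le_of_lt (measure_mono diff_subset) measure_ball_lt_top
          · intro z hz
            exact hM₁ ψ hψ z (ball_subset_closedBall (hss hz))
      _ ≤ M₁ * (6*π*δ*ρ) :=
          mul_le_mul_of_nonneg_left (hvd ζ ζ' hζ hζ') hM₁0
  -- main estimate
  have hmain : (π*ρ^2) * ‖ψ ζ₁ - ψ ζ₂‖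
      ≤ 8/3*π*M₂*ρ^3 + 2*(M₁*(6*π*δ*ρ)) := by
    have hsplit : (π*ρ^2) • (ψ ζ₁ - ψ ζ₂)
        = ((π*ρ^2) • ψ ζ₁ - ∫ z in A₁, ψ z)
          + ((∫ z in A₁ \ A₂, ψ z) - (∫ z in A₂ \ A₁, ψ z))
          + ((∫ z in A₂, ψ z) - (π*ρ^2) • ψ ζ₂) := by
      rw [hd₁, hd₂, smul_sub]
      abel
    calc (π*ρ^2) * ‖ψ ζ₁ - ψ ζ₂‖ = ‖(π*ρ^2) • (ψ ζ₁ - ψ ζ₂)‖ := by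
          rw [norm_smul, Real.norm_eq_abs, _root_.abs_of_nonneg (by positivity)]
      _ ≤ ‖(π*ρ^2) • ψ ζ₁ - ∫ z in A₁, ψ z‖
          + ‖(∫ z in A₁ \ A₂, ψ z) - (∫ z in A₂ \ A₁, ψ z)‖
          + ‖(∫ z in A₂, ψ z) - (π*ρ^2) • ψ ζ₂‖ := by
          rw [hsplit]
          exact norm_add₃_le
      _ ≤ (4/3*π*M₂*ρ^3) + (M₁*(6*π*δ*ρ) + M₁*(6*π*δ*ρ)) + (4/3*π*M₂*ρ^3) := by
          have e1 : ‖(π*ρ^2) • ψ ζ₁ - ∫ z in A₁, ψ z‖ ≤ 4/3*π*M₂*ρ^3 := by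
            rw [← norm_neg, neg_sub]
            exact hB₁
          have e2 : ‖(∫ z in A₁ \ A₂, ψ z) - (∫ z in A₂ \ A₁, ψ z)‖
              ≤ M₁*(6*π*δ*ρ) + M₁*(6*π*δ*ρ) :=
            le_trans (norm_sub_le _ _)
              (add_le_add (hIbd ζ₁ ζ₂ hζ₁ hζ₂) (hIbd ζ₂ ζ₁ hζ₂ hζ₁))
          exact add_le_add (add_le_add e1 e2) hB₂
      _ = 8/3*π*M₂*ρ^3 + 2*(M₁*(6*π*δ*ρ)) := by ring
  -- conclude
  have hρ2pos : 0 < π*ρ^2 := by positivity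
  rw [← mul_lt_mul_iff_right₀ hρ2pos]
  apply lt_of_le_of_lt hmain
  -- arithmetic: 8/3 π M₂ ρ³ + 12 π M₁ δ ρ < π ρ² ε
  have hρε : 8*M₂*ρ ≤ ε := by
    have h1 : ρ ≤ ε/(8*(M₂+1)) := min_le_right _ _
    have h2 : 8*(M₂+1) > 0 := by positivity
    rw [le_div_iff₀ h2] at h1
    nlinarith
  have hδε : 12*M₁*δ ≤ ε*ρ/4 := by
    have h1 : δ ≤ ε*ρ/(48*(M₁+1)) := min_le_right _ _
    have h2 : (48:ℝ)*(M₁+1) > 0 := by positivity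
    rw [le_div_iff₀ h2] at h1
    nlinarith
  have hπ := Real.pi_pos
  have k1 := mul_le_mul_of_nonneg_left hρε (by positivity : (0:ℝ) ≤ π*ρ^2/3)
  have k2 := mul_le_mul_of_nonneg_left hδε (by positivity : (0:ℝ) ≤ π*ρ)
  have k3 : 0 < π*ρ^2*ε := by positivity
  nlinarith [k1, k2, k3]
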